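/- Let T ≥ 1 and K ≥ 0 be integers and let 0 = t_0 < t_1 < t_2 < ⋯ < t_K ≤ T be integers. Define h(t) = t − max{ t_j : 0 ≤ j ≤ K, t_j < t } for 1 ≤ t ≤ T. Then Σ_{t=1}^{T} h(t) ≥ T²/(2(K + 1)) + T/2. -/

import Mathlib

open Finset

lemma biUnion_Ioc_aux (a : ℕ → ℕ) (ha : ∀ i, a i ≤ a (i + 1)) (n : ℕ) :
    (range n).biUnion (fun j => Ioc (a j) (a (j + 1))) = Ioc (a 0) (a n) := by
  induction n with
  | zero => simp
  | succ n ih =>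
      have hmono : ∀ i j, i ≤ j → a i ≤ a j := fun i j h => monotone_nat_of_le_succ ha h
      rw [range_add_one, biUnion_insert, ih, union_comm,
        Ioc_union_Ioc_eq_Ioc (hmono 0 n (Nat.zero_le n)) (ha n)]

lemma sum_Ioc_cast (d : ℕ) : ∑ m ∈ Ioc 0 d, (m : ℝ) = d * (d + 1) / 2 := by
  induction d with
  | zero => simp
  | succ d ih =>
      rw [← Ioc_union_Ioc_eq_Ioc (Nat.zero_le d) (Nat.le_succ d), sum_union]
      · simp [ih]; push_cast; ring
      · intro x hx hy
        intro z hz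
        have := hx hz; have := hy hz
        simp only [mem_Ioc] at *
        omega

theorem stmt_19 (T K : ℕ) (hT : 1 ≤ T) (t : ℕ → ℕ)
    (h0 : t 0 = 0) (hmono : ∀ j, j < K → t j < t (j + 1)) (hK : t K ≤ T) :
    ∑ s ∈ Finset.Icc 1 T,
        ((s : ℝ) - ((((Finset.range (K + 1)).filter (fun j => t j < s)).sup t : ℕ) : ℝ)) ≥
      (T : ℝ) ^ 2 / (2 * ((K : ℝ) + 1)) + (T : ℝ) / 2 := by
  set a : ℕ → ℕ := fun j => if j ≤ K then t j else T with ha_def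
  have ha : ∀ i, a i ≤ a (i + 1) := by
    intro i
    simp only [ha_def]
    split_ifs with h1 h2 h2
    · exact le_of_lt (hmono i (by omega))
    · have : i = K := by omega
      subst this; exact hK
    · omega
    · exact le_rfl
  have hamono : ∀ i j, i ≤ j → a i ≤ a j := fun i j h => monotone_nat_of_le_succ ha h
  have htmono : ∀ i j, i ≤ j → j ≤ K → t i ≤ t j := by
    intro i j hij hjK
    have := hamono i j hij
    simp only [ha_def, if_pos (le_trans hij hjK), if_pos hjK] at this
    exact this
  -- partition
  have hIcc : Icc 1 T = (range (K + 1)).biUnion (fun j => Ioc (a j) (a (j + 1))) := by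
    rw [biUnion_Ioc_aux a ha (K + 1)]
    have h1 : a 0 = 0 := by simp [ha_def, h0]
    have h2 : a (K + 1) = T := by simp [ha_def]
    rw [h1, h2]
    ext x; simp [Nat.lt_iff_add_one_le]
  have hdisj : ∀ x ∈ range (K + 1), ∀ y ∈ range (K + 1), x ≠ y →
      Disjoint (Ioc (a x) (a (x + 1))) (Ioc (a y) (a (y + 1))) := by
    intro x _ y _ hxy
    intro s hs1 hs2 z hz
    have h1 := hs1 hz; have h2 := hs2 hz
    simp only [mem_Ioc] at h1 h2
    rcases lt_or_gt_of_ne hxy with h | h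
    · have : a (x + 1) ≤ a y := hamono _ _ (by omega); omega
    · have : a (y + 1) ≤ a x := hamono _ _ (by omega); omega
  rw [hIcc, sum_biUnion hdisj]
  -- evaluate sup on each block
  have hsup : ∀ j ∈ range (K + 1), ∀ s ∈ Ioc (a j) (a (j + 1)),
      ((range (K + 1)).filter (fun i => t i < s)).sup t = t j := by
    intro j hj s hs
    simp only [mem_range] at hj
    simp only [mem_Ioc] at hs
    have hjK : j ≤ K := by omega
    have haj : a j = t j := by simp [ha_def, hjK]
    apply le_antisymm
    · apply Finset.sup_le
      intro i hi
      simp only [mem_filter, mem_range] at hi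
      by_cases hij : i ≤ j
      · exact htmono i j hij hjK
      · exfalso
        have h1 : a (j + 1) ≤ t i := by
          by_cases hjK' : j + 1 ≤ K
          · have : a (j + 1) = t (j + 1) := by simp [ha_def, hjK']
            rw [this]; exact htmono (j + 1) i (by omega) (by omega)
          · omega
        omega
    · apply Finset.le_sup
      simp only [mem_filter, mem_range]
      exact ⟨by omega, haj ▸ hs.1⟩
  -- per-block sum
  set d : ℕ → ℕ := fun j => a (j + 1) - a j with hd_def
  have hblock : ∀ j ∈ range (K + 1),
      ∑ s ∈ Ioc (a j) (a (j + 1)),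
        ((s : ℝ) - ((((range (K + 1)).filter (fun i => t i < s)).sup t : ℕ) : ℝ))
      = (d j : ℝ) * (d j + 1) / 2 := by
    intro j hj
    have hjK : j ≤ K := by simpa [Nat.lt_succ_iff] using hj
    have haj : a j = t j := by simp [ha_def, hjK]
    have hrw : ∀ s ∈ Ioc (a j) (a (j + 1)),
        ((s : ℝ) - ((((range (K + 1)).filter (fun i => t i < s)).sup t : ℕ) : ℝ))
        = (s : ℝ) - a j := by
      intro s hs
      rw [hsup j hj s hs, haj]
    rw [sum_congr rfl hrw]
    have h1 : a (j + 1) = a j + d j := by have := ha j; simp only [hd_def]; omega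
    have h2 : Ioc (a j) (a j + d j) = map (addLeftEmbedding (a j)) (Ioc 0 (d j)) := by
      rw [map_add_left_Ioc]; simp
    rw [h1, h2, sum_map]
    simp only [addLeftEmbedding_apply]
    have : ∀ m ∈ Ioc 0 (d j), ((a j + m : ℕ) : ℝ) - (a j : ℝ) = (m : ℝ) := by
      intro m _; push_cast; ring
    rw [sum_congr rfl this, sum_Ioc_cast]
  rw [sum_congr rfl hblock]
  -- sum of d is T
  have hsumd : ∑ j ∈ range (K + 1), (d j : ℝ) = T := by
    have : ∀ n, ∑ j ∈ range n, (d j : ℝ) = (a n : ℝ) - (a 0 : ℝ) := by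
      intro n
      induction n with
      | zero => simp
      | succ n ih =>
          rw [sum_range_succ, ih]
          have : (d n : ℝ) = (a (n + 1) : ℝ) - (a n : ℝ) := by
            have := ha n
            simp only [hd_def]
            push_cast [Nat.cast_sub this]
            ring
          rw [this]; ring
    rw [this (K + 1)]
    simp [ha_def, h0]
  -- Cauchy-Schwarz
  have hCS : (T : ℝ) ^ 2 ≤ (K + 1 : ℝ) * ∑ j ∈ range (K + 1), (d j : ℝ) ^ 2 := by
    have := sq_sum_le_card_mul_sum_sq (s := range (K + 1)) (f := fun j => (d j : ℝ))
    rw [hsumd] at this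
    simpa using this
  have hK1 : (0 : ℝ) < (K : ℝ) + 1 := by positivity
  have hsum2 : ∑ j ∈ range (K + 1), (d j : ℝ) * (d j + 1) / 2
      = ((∑ j ∈ range (K + 1), (d j : ℝ) ^ 2) + T) / 2 := by
    rw [← hsumd, ← sum_add_distrib, ← sum_div]
    congr 1
    apply sum_congr rfl
    intro j _
    ring
  rw [hsum2]
  rw [ge_iff_le, div_add_div _ _ (by positivity) (by norm_num : (2:ℝ) ≠ 0)]
  rw [div_le_div_iff₀ (by positivity) (by norm_num)]
  have h2 : (T : ℝ) ^ 2 / ((K : ℝ) + 1) ≤ ∑ j ∈ range (K + 1), (d j : ℝ) ^ 2 := by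
    rw [div_le_iff₀ hK1]
    calc (T:ℝ)^2 ≤ (K + 1 : ℝ) * ∑ j ∈ range (K + 1), (d j : ℝ) ^ 2 := hCS
      _ = (∑ j ∈ range (K + 1), (d j : ℝ) ^ 2) * ((K:ℝ) + 1) := by ring
  nlinarith [h2, hK1]
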